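/- Let f : ℝ^d → ℝ be Lipschitz continuous with Lipschitz constant K. Then for every y₀ ∈ ℝ^d with ‖y₀‖ = 1 there exists A ∈ ℝ with |A| ≤ K such that the vector (A, y₀) ∈ ℝ × ℝ^d belongs to Tan(graph(f), (f(0), 0)). -/

import Mathlib

open Filter

/-- The tangent cone of `A ⊆ E` at `a`: all `v` such that there is a sequence
`x k ∈ A \ {a}` with `x k → a` whose normalized directions `(x k − a)/‖x k − a‖`
converge to some `w` with `v = ‖v‖ • w`. -/
def tanCone {E : Type*} [NormedAddCommGroup E] [NormedSpace ℝ E]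
    (A : Set E) (a : E) : Set E :=
  {v | ∃ x : ℕ → E, (∀ k, x k ∈ A) ∧ (∀ k, x k ≠ a) ∧
    Tendsto x atTop (nhds a) ∧
    ∃ w : E, Tendsto (fun k => ‖x k - a‖⁻¹ • (x k - a)) atTop (nhds w) ∧
      v = ‖v‖ • w}

/-- Let `f : ℝ^d → ℝ` be Lipschitz with constant `K`. Then for every unit vector
`y₀ ∈ ℝ^d` there is `A ∈ ℝ` with `|A| ≤ K` such that `(A, y₀)` belongs to the tangent
cone of `graph f` (function value in the first coordinate) at `(f 0, 0)`. -/
theorem graph_tangent_vector_in_direction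
    (d : ℕ) (f : EuclideanSpace ℝ (Fin d) → ℝ) (K : NNReal)
    (hf : LipschitzWith K f) :
    ∀ y₀ : EuclideanSpace ℝ (Fin d), ‖y₀‖ = 1 →
      ∃ A : ℝ, |A| ≤ (K : ℝ) ∧
        ((A, y₀) : ℝ × EuclideanSpace ℝ (Fin d)) ∈
          tanCone {p : ℝ × EuclideanSpace ℝ (Fin d) | p.1 = f p.2} (f 0, 0) := by
  intro y₀ hy₀
  have hy₀ne : y₀ ≠ 0 := by
    intro h; rw [h, norm_zero] at hy₀; norm_num at hy₀
  set t : ℕ → ℝ := fun k => (1 : ℝ) / (k + 1) with ht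
  have htpos : ∀ k, 0 < t k := fun k => by positivity
  have htne : ∀ k, t k ≠ 0 := fun k => ne_of_gt (htpos k)
  have htlim : Tendsto t atTop (nhds 0) := tendsto_one_div_add_atTop_nhds_zero_nat
  set g : ℕ → ℝ := fun k => (f (t k • y₀) - f 0) / t k with hg
  have hgbd : ∀ k, g k ∈ Set.Icc (-(K : ℝ)) (K : ℝ) := by
    intro k
    have h1 : dist (f (t k • y₀)) (f 0) ≤ K * dist (t k • y₀) 0 := hf.dist_le_mul _ _
    have h2 : dist (t k • y₀) 0 = t k := by
      rw [dist_zero_right, norm_smul, hy₀, mul_one, Real.norm_eq_abs,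
        abs_of_pos (htpos k)]
    rw [Real.dist_eq, h2] at h1
    have : |g k| ≤ K := by
      rw [hg]
      simp only []
      rw [abs_div, abs_of_pos (htpos k), div_le_iff₀ (htpos k)]
      exact h1
    exact abs_le.mp this
  obtain ⟨A, hA, φ, hφ, hconv⟩ :=
    (isCompact_Icc (a := -(K : ℝ)) (b := (K : ℝ))).tendsto_subseq hgbd
  have hAbd : |A| ≤ (K : ℝ) := abs_le.mpr ⟨hA.1, hA.2⟩
  refine ⟨A, hAbd, ?_⟩
  set s : ℕ → ℝ := fun n => t (φ n) with hs
  set g' : ℕ → ℝ := fun n => g (φ n) with hg'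
  have hspos : ∀ n, 0 < s n := fun n => htpos _
  have hsne : ∀ n, s n ≠ 0 := fun n => ne_of_gt (hspos n)
  have hslim : Tendsto s atTop (nhds 0) := htlim.comp hφ.tendsto_atTop
  set m : ℝ := max |A| 1 with hm
  have hmpos : (0 : ℝ) < m := lt_max_of_lt_right one_pos
  have hmne : m ≠ 0 := ne_of_gt hmpos
  set x : ℕ → ℝ × EuclideanSpace ℝ (Fin d) :=
    fun n => (f (s n • y₀), s n • y₀) with hx
  have hkey : ∀ n, f (s n • y₀) - f 0 = s n * g' n := by
    intro n
    rw [hg']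
    rw [hg]; show f (s n • y₀) - f 0 = s n * ((f (s n • y₀) - f 0) / s n); field_simp [hsne n]
  have hnorm : ∀ n, ‖x n - (f 0, (0 : EuclideanSpace ℝ (Fin d)))‖
      = s n * max |g' n| 1 := by
    intro n
    have : x n - (f 0, (0 : EuclideanSpace ℝ (Fin d)))
        = (s n * g' n, s n • y₀) := by
      rw [hx]; ext
      · simp [hkey n]
      · simp
    rw [this, Prod.norm_def]
    simp only [Real.norm_eq_abs, norm_smul, hy₀, mul_one, abs_mul,
      abs_of_pos (hspos n)]
    rw [mul_max_of_nonneg _ _ (le_of_lt (hspos n)), mul_one]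
  refine ⟨x, fun k => rfl, ?_, ?_, (m⁻¹ * A, m⁻¹ • y₀), ?_, ?_⟩
  · intro k h
    have : s k • y₀ = (0 : EuclideanSpace ℝ (Fin d)) := congrArg Prod.snd h
    exact smul_ne_zero (hsne k) hy₀ne this
  · have h1 : Tendsto (fun n => s n • y₀) atTop (nhds (0 : EuclideanSpace ℝ (Fin d))) := by
      have := hslim.smul_const y₀
      rwa [zero_smul] at this
    have h2 : Tendsto (fun n => f (s n • y₀)) atTop (nhds (f 0)) :=
      (hf.continuous.tendsto 0).comp h1
    exact h2.prodMk_nhds h1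
  · have hMlim : Tendsto (fun n => max |g' n| 1) atTop (nhds m) := by
      have habs : Tendsto (fun n => |g' n|) atTop (nhds |A|) :=
        hconv.abs
      exact habs.max tendsto_const_nhds
    have hMne : ∀ n, max |g' n| 1 ≠ 0 :=
      fun n => ne_of_gt (lt_max_of_lt_right one_pos)
    have heq : ∀ n, ‖x n - (f 0, (0 : EuclideanSpace ℝ (Fin d)))‖⁻¹ •
        (x n - (f 0, (0 : EuclideanSpace ℝ (Fin d))))
        = ((max |g' n| 1)⁻¹ * g' n, (max |g' n| 1)⁻¹ • y₀) := by
      intro n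
      have hdiff : x n - (f 0, (0 : EuclideanSpace ℝ (Fin d)))
          = (s n * g' n, s n • y₀) := by
        rw [hx]; ext
        · simp [hkey n]
        · simp
      rw [hnorm n, hdiff, Prod.smul_mk]
      refine Prod.ext ?_ ?_
      · simp only [smul_eq_mul]
        field_simp
        simp [hsne n]
      · simp only [smul_smul]
        congr 1
        rw [mul_inv, mul_comm ((s n)⁻¹), mul_assoc, inv_mul_cancel₀ (hsne n),
          mul_one]
    rw [show (fun k => ‖x k - ((f 0, (0 : EuclideanSpace ℝ (Fin d))) : ℝ × EuclideanSpace ℝ (Fin d))‖⁻¹ • (x k - (f 0, (0 : EuclideanSpace ℝ (Fin d))))) = fun n => (((max |g' n| 1)⁻¹ * g' n, (max |g' n| 1)⁻¹ • y₀) : ℝ × EuclideanSpace ℝ (Fin d)) from funext heq]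
    have hinv : Tendsto (fun n => (max |g' n| 1)⁻¹) atTop (nhds m⁻¹) :=
      hMlim.inv₀ hmne
    exact (hinv.mul hconv).prodMk_nhds (hinv.smul_const y₀)
  · have hnormv : ‖((A, y₀) : ℝ × EuclideanSpace ℝ (Fin d))‖ = m := by
      rw [Prod.norm_def, Real.norm_eq_abs, hy₀]
    rw [hnormv]
    ext
    · simp only [Prod.smul_fst, smul_eq_mul]
      field_simp
    · simp only [Prod.smul_snd, smul_smul]
      rw [mul_inv_cancel₀ hmne, one_smul]
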